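/- Let d ∈ ℕ, A a nonempty finite set, η, c, K ∈ [0,∞), L₁, L₂ ∈ [0,∞) with cL₁ < 1, cL₂ < 1, and ηL₂ < 1, let w : ℝ^d → (0,∞) be measurable. Let f₁, f₂ : ℝ^d × ℝ^A → ℝ be measurable with |fᵢ(x,r)−fᵢ(x,s)| ≤ Lᵢ max_a |r(a)−s(a)| (i=1,2) and |f₂(x,r)−f₂(y,r)| ≤ K‖x−y‖. Let κᵢ^{(a)} (i=1,2, a∈A) be stochastic kernels with ∫ w dκᵢ^{(a)}(x,·) ≤ c·w(x), sup_{x,a} w(x)^{-1} ∫ |fᵢ(y,0)| κᵢ^{(a)}(x,dy) < ∞, sup_{x,a} w(x)^{-1} ∫ ‖y‖ κᵢ^{(a)}(x,dy) < ∞, and W₁(κ₂^{(a)}(x,·), κ₂^{(a)}(y,·)) ≤ η‖x−y‖. Then, with u₁, u₂ the unique w-bounded fixed points of the respective equations (uᵢ(x))(a) = ∫ fᵢ(y,uᵢ(y)) κᵢ^{(a)}(x,dy), it holds that sup_{(x,a)} |u₁(x)(a)−u₂(x)(a)|/w(x) ≤ (c/(1−c·min{L₁,L₂})) · sup_{(y,r)}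 |f₁(y,r)−f₂(y,r)|/w(y) + (K/((1−ηL₂)(1−cL₂))) · sup_{(y,b)} W₁(κ₁^{(b)}(y,·), κ₂^{(b)}(y,·))/w(y). -/

import Mathlib

open MeasureTheory ProbabilityTheory Pointwise

/-- The Wasserstein-1 distance between two probability measures on `ℝ^d`, defined as the
infimum over couplings of the integral of the distance. -/
noncomputable def W1 {d : ℕ} (μ ν : Measure (EuclideanSpace ℝ (Fin d))) : ℝ :=
  sInf { r : ℝ | ∃ π : Measure (EuclideanSpace ℝ (Fin d) × EuclideanSpace ℝ (Fin d)),
    IsProbabilityMeasure π ∧ π.map Prod.fst = μ ∧ π.map Prod.snd = ν ∧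
    r = ∫ p, ‖p.1 - p.2‖ ∂π }

lemma W1_nonneg {d : ℕ} (μ ν : Measure (EuclideanSpace ℝ (Fin d))) : 0 ≤ W1 μ ν := by
  apply Real.sInf_nonneg
  rintro r ⟨π, hπ, h1, h2, rfl⟩
  exact integral_nonneg fun p => norm_nonneg _

lemma int_diff_bound {α : Type*} [MeasurableSpace α] (μ : Measure α)
    (w h1 h2 : α → ℝ) (b cw : ℝ) (hb : 0 ≤ b)
    (hw : Integrable w μ) (hwi : ∫ y, w y ∂μ ≤ cw)
    (H1 : Integrable h1 μ) (H2 : Integrable h2 μ)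
    (hpt : ∀ y, |h1 y - h2 y| ≤ b * w y) :
    |∫ y, h1 y ∂μ - ∫ y, h2 y ∂μ| ≤ b * cw := by
  rw [← integral_sub H1 H2]
  calc |∫ y, (h1 y - h2 y) ∂μ| ≤ ∫ y, |h1 y - h2 y| ∂μ := by
        simpa using norm_integral_le_integral_norm (μ := μ) (fun y => h1 y - h2 y)
    _ ≤ ∫ y, b * w y ∂μ := integral_mono (H1.sub H2).abs (hw.const_mul b) hpt
    _ = b * ∫ y, w y ∂μ := integral_const_mul b _
    _ ≤ b * cw := mul_le_mul_of_nonneg_left hwi hb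

lemma kantorovich {d : ℕ} (μ ν : Measure (EuclideanSpace ℝ (Fin d)))
    [IsProbabilityMeasure μ] [IsProbabilityMeasure ν]
    (g : EuclideanSpace ℝ (Fin d) → ℝ) (Lg : ℝ) (hLg : 0 ≤ Lg)
    (hg : ∀ x y, |g x - g y| ≤ Lg * ‖x - y‖)
    (hgμ : Integrable g μ) (hgν : Integrable g ν)
    (hmμ : Integrable (fun y => ‖y‖) μ) (hmν : Integrable (fun y => ‖y‖) ν) :
    |∫ y, g y ∂μ - ∫ y, g y ∂ν| ≤ Lg * W1 μ ν := by
  have hgc : Continuous g := by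
    have : LipschitzWith (Real.toNNReal Lg) g := by
      apply LipschitzWith.of_dist_le_mul
      intro x y
      simpa [Real.dist_eq, Real.coe_toNNReal _ hLg, dist_eq_norm] using hg x y
    exact this.continuous
  set S := { r : ℝ | ∃ π : Measure (EuclideanSpace ℝ (Fin d) × EuclideanSpace ℝ (Fin d)),
    IsProbabilityMeasure π ∧ π.map Prod.fst = μ ∧ π.map Prod.snd = ν ∧
    r = ∫ p, ‖p.1 - p.2‖ ∂π } with hS
  have hne : S.Nonempty := by
    refine ⟨∫ p, ‖p.1 - p.2‖ ∂(μ.prod ν), μ.prod ν, inferInstance, ?_, ?_, rfl⟩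
    · simp [Measure.map_fst_prod]
    · simp [Measure.map_snd_prod]
  have key : ∀ r ∈ S, |∫ y, g y ∂μ - ∫ y, g y ∂ν| ≤ Lg * r := by
    rintro r ⟨π, hπ, hπ1, hπ2, rfl⟩
    have hg1 : Integrable (fun p : EuclideanSpace ℝ (Fin d) × EuclideanSpace ℝ (Fin d) => g p.1) π := by
      rw [← hπ1] at hgμ
      exact (integrable_map_measure hgc.aestronglyMeasurable measurable_fst.aemeasurable).mp hgμ
    have hg2 : Integrable (fun p : EuclideanSpace ℝ (Fin d) × EuclideanSpace ℝ (Fin d) => g p.2) π := by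
      rw [← hπ2] at hgν
      exact (integrable_map_measure hgc.aestronglyMeasurable measurable_snd.aemeasurable).mp hgν
    have hn1 : Integrable (fun p : EuclideanSpace ℝ (Fin d) × EuclideanSpace ℝ (Fin d) => ‖p.1‖) π := by
      rw [← hπ1] at hmμ
      exact (integrable_map_measure (continuous_norm.aestronglyMeasurable) measurable_fst.aemeasurable).mp hmμ
    have hn2 : Integrable (fun p : EuclideanSpace ℝ (Fin d) × EuclideanSpace ℝ (Fin d) => ‖p.2‖) π := by
      rw [← hπ2] at hmν
      exact (integrable_map_measure (continuous_norm.aestronglyMeasurable) measurable_snd.aemeasurable).mp hmν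
    have hnd : Integrable (fun p : EuclideanSpace ℝ (Fin d) × EuclideanSpace ℝ (Fin d) => ‖p.1 - p.2‖) π := by
      refine (hn1.add hn2).mono' ?_ ?_
      · exact (continuous_fst.sub continuous_snd).norm.aestronglyMeasurable
      · filter_upwards with p
        simpa using norm_sub_le p.1 p.2
    have h1 : ∫ y, g y ∂μ = ∫ p, g p.1 ∂π := by
      rw [← hπ1, integral_map measurable_fst.aemeasurable hgc.aestronglyMeasurable]
    have h2 : ∫ y, g y ∂ν = ∫ p, g p.2 ∂π := by
      rw [← hπ2, integral_map measurable_snd.aemeasurable hgc.aestronglyMeasurable]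
    rw [h1, h2, ← integral_sub hg1 hg2]
    calc |∫ p, (g p.1 - g p.2) ∂π| ≤ ∫ p, |g p.1 - g p.2| ∂π := by simpa using norm_integral_le_integral_norm (μ := π) (fun p => g p.1 - g p.2)
      _ ≤ ∫ p, Lg * ‖p.1 - p.2‖ ∂π := by
          refine integral_mono (hg1.sub hg2).abs (hnd.const_mul Lg) ?_
          intro p; exact hg p.1 p.2
      _ = Lg * ∫ p, ‖p.1 - p.2‖ ∂π := integral_const_mul Lg _
  have : Lg * sInf S = sInf (Lg • S) := (Real.sInf_smul_of_nonneg hLg S).symm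
  rw [show W1 μ ν = sInf S from rfl, this]
  refine le_csInf (hne.smul_set) ?_
  rintro b ⟨r, hr, rfl⟩
  simpa [smul_eq_mul] using key r hr

noncomputable def fpIter {d : ℕ} {A : Type*}
    (f : EuclideanSpace ℝ (Fin d) → (A → ℝ) → ℝ)
    (κ : A → Kernel (EuclideanSpace ℝ (Fin d)) (EuclideanSpace ℝ (Fin d))) :
    ℕ → EuclideanSpace ℝ (Fin d) → A → ℝ
  | 0 => fun _ _ => 0
  | n + 1 => fun x a => ∫ y, f y (fpIter f κ n y) ∂(κ a x)

lemma fp_lipschitz {d : ℕ} {A : Type*} [Fintype A] [Nonempty A]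
    (η c K L₂ : ℝ) (hη : 0 ≤ η) (hc : 0 ≤ c) (hK : 0 ≤ K) (hL₂ : 0 ≤ L₂)
    (hcL₂ : c * L₂ < 1) (hηL₂ : η * L₂ < 1)
    (w : EuclideanSpace ℝ (Fin d) → ℝ) (hwpos : ∀ x, 0 < w x)
    (f₂ : EuclideanSpace ℝ (Fin d) → (A → ℝ) → ℝ)
    (hf₂m : Measurable (fun p : EuclideanSpace ℝ (Fin d) × (A → ℝ) => f₂ p.1 p.2))
    (hf₂lip : ∀ x r s, |f₂ x r - f₂ x s| ≤ L₂ * ⨆ a, |r a - s a|)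
    (hf₂xlip : ∀ x y r, |f₂ x r - f₂ y r| ≤ K * ‖x - y‖)
    (κ₂ : A → Kernel (EuclideanSpace ℝ (Fin d)) (EuclideanSpace ℝ (Fin d)))
    (hκ₂ : ∀ a, IsMarkovKernel (κ₂ a))
    (hwint₂ : ∀ a x, Integrable w (κ₂ a x))
    (hwbd₂ : ∀ a x, ∫ y, w y ∂(κ₂ a x) ≤ c * w x)
    (hf₂0int : ∀ a x, Integrable (fun y => f₂ y 0) (κ₂ a x))
    (hf₂0bd : ∃ C, ∀ a x, ∫ y, |f₂ y 0| ∂(κ₂ a x) ≤ C * w x)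
    (hmom₂ : ∀ a x, Integrable (fun y => ‖y‖) (κ₂ a x))
    (hκ₂lip : ∀ a x y, W1 (κ₂ a x) (κ₂ a y) ≤ η * ‖x - y‖)
    (u₂ : EuclideanSpace ℝ (Fin d) → A → ℝ)
    (hu₂bdd : ∃ C, ∀ x a, |u₂ x a| ≤ C * w x)
    (hu₂int : ∀ a x, Integrable (fun y => f₂ y (u₂ y)) (κ₂ a x))
    (hu₂fix : ∀ a x, u₂ x a = ∫ y, f₂ y (u₂ y) ∂(κ₂ a x)) :
    ∀ x y a, |u₂ x a - u₂ y a| ≤ (η * K / (1 - η * L₂)) * ‖x - y‖ := by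
  haveI : ∀ a x, IsProbabilityMeasure (κ₂ a x) := fun a x => (hκ₂ a).isProbabilityMeasure x
  have h1ηL₂ : 0 < 1 - η * L₂ := by linarith
  have h1cL₂ : 0 < 1 - c * L₂ := by linarith
  obtain ⟨Λ, hΛdef⟩ : ∃ Λ : ℝ, Λ = η * K / (1 - η * L₂) := ⟨_, rfl⟩
  have hΛ : 0 ≤ Λ := by rw [hΛdef]; exact div_nonneg (mul_nonneg hη hK) h1ηL₂.le
  have hΛmul : Λ * (1 - η * L₂) = η * K := by rw [hΛdef]; field_simp
  have hΛeq : η * (K + L₂ * Λ) = Λ := by linear_combination (-1 : ℝ) * hΛmul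
  obtain ⟨C₀, hC₀⟩ := hf₂0bd
  have hC₀nn : 0 ≤ C₀ := by
    have a0 : A := Classical.arbitrary A
    have h := hC₀ a0 0
    have h2 : (0:ℝ) ≤ ∫ y, |f₂ y 0| ∂(κ₂ a0 0) := integral_nonneg fun y => abs_nonneg _
    nlinarith [hwpos (0 : EuclideanSpace ℝ (Fin d))]
  obtain ⟨Cs, hCs⟩ : ∃ Cs : ℝ, Cs = C₀ / (1 - c * L₂) := ⟨_, rfl⟩
  have hCsnn : 0 ≤ Cs := by rw [hCs]; exact div_nonneg hC₀nn h1cL₂.le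
  have hCsmul : Cs * (1 - c * L₂) = C₀ := by rw [hCs]; field_simp
  have hCseq : C₀ + L₂ * Cs * c = Cs := by linear_combination (-1 : ℝ) * hCsmul
  set v := fpIter f₂ κ₂ with hv
  have vmeas : ∀ n, Measurable (fun y => v n y : EuclideanSpace ℝ (Fin d) → A → ℝ) := by
    intro n
    induction n with
    | zero => simpa [hv, fpIter] using measurable_const
    | succ n ih =>
      apply measurable_pi_lambda
      intro a
      exact (StronglyMeasurable.integral_kernel_prod_right'
        (κ := κ₂ a) (f := fun p : _ × _ => f₂ p.2 (v n p.2))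
        ((hf₂m.comp ((measurable_snd).prodMk (ih.comp measurable_snd))).stronglyMeasurable)).measurable
  have fmeas : ∀ n, Measurable fun y => f₂ y (v n y) :=
    fun n => hf₂m.comp (measurable_id.prodMk (vmeas n))
  have vbd : ∀ n x a, |v n x a| ≤ Cs * w x := by
    intro n
    induction n with
    | zero =>
      intro x a
      simp only [hv, fpIter, abs_zero]
      exact mul_nonneg hCsnn (hwpos x).le
    | succ n ih =>
      intro x a
      have hpt : ∀ y, |f₂ y (v n y)| ≤ |f₂ y 0| + L₂ * (Cs * w y) := by
        intro y
        have h1 : |f₂ y (v n y) - f₂ y 0| ≤ L₂ * ⨆ b, |v n y b - (0 : A → ℝ) b| := hf₂lip y _ _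
        have h2 : (⨆ b, |v n y b - (0 : A → ℝ) b|) ≤ Cs * w y := by
          apply ciSup_le; intro b; simpa using ih y b
        have h4 := abs_sub_abs_le_abs_sub (f₂ y (v n y)) (f₂ y 0)
        nlinarith [mul_le_mul_of_nonneg_left h2 hL₂]
      have hbint : Integrable (fun y => |f₂ y 0| + L₂ * (Cs * w y)) (κ₂ a x) :=
        ((hf₂0int a x).abs).add (((hwint₂ a x).const_mul Cs).const_mul L₂)
      have hint : Integrable (fun y => f₂ y (v n y)) (κ₂ a x) := by
        refine hbint.mono' (fmeas n).aestronglyMeasurable ?_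
        filter_upwards with y
        simpa using hpt y
      show |∫ y, f₂ y (v n y) ∂(κ₂ a x)| ≤ Cs * w x
      calc |∫ y, f₂ y (v n y) ∂(κ₂ a x)| ≤ ∫ y, |f₂ y (v n y)| ∂(κ₂ a x) := by
            simpa using norm_integral_le_integral_norm (μ := κ₂ a x) (fun y => f₂ y (v n y))
        _ ≤ ∫ y, (|f₂ y 0| + L₂ * (Cs * w y)) ∂(κ₂ a x) := integral_mono hint.abs hbint hpt
        _ = (∫ y, |f₂ y 0| ∂(κ₂ a x)) + L₂ * (Cs * ∫ y, w y ∂(κ₂ a x)) := by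
            rw [integral_add ((hf₂0int a x).abs) (((hwint₂ a x).const_mul Cs).const_mul L₂),
              integral_const_mul, integral_const_mul]
        _ ≤ C₀ * w x + L₂ * (Cs * (c * w x)) := by
            refine add_le_add (hC₀ a x) ?_
            exact mul_le_mul_of_nonneg_left
              (mul_le_mul_of_nonneg_left (hwbd₂ a x) hCsnn) hL₂
        _ ≤ Cs * w x := by nlinarith [hwpos x, hCseq]
  have fbound : ∀ n y, |f₂ y (v n y)| ≤ |f₂ y 0| + L₂ * (Cs * w y) := by
    intro n y
    have h1 : |f₂ y (v n y) - f₂ y 0| ≤ L₂ * ⨆ b, |v n y b - (0 : A → ℝ) b| := hf₂lip y _ _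
    have h2 : (⨆ b, |v n y b - (0 : A → ℝ) b|) ≤ Cs * w y := by
      apply ciSup_le; intro b; simpa using vbd n y b
    have h4 := abs_sub_abs_le_abs_sub (f₂ y (v n y)) (f₂ y 0)
    nlinarith [mul_le_mul_of_nonneg_left h2 hL₂]
  have vint : ∀ n a x, Integrable (fun y => f₂ y (v n y)) (κ₂ a x) := by
    intro n a x
    refine (((hf₂0int a x).abs).add (((hwint₂ a x).const_mul Cs).const_mul L₂)).mono'
      (fmeas n).aestronglyMeasurable ?_
    filter_upwards with y
    simpa using fbound n y
  have vlip : ∀ n x y a, |v n x a - v n y a| ≤ Λ * ‖x - y‖ := by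
    intro n
    induction n with
    | zero =>
      intro x y a
      simp only [hv, fpIter, sub_zero, abs_zero]
      exact mul_nonneg hΛ (norm_nonneg _)
    | succ n ih =>
      intro x y a
      have glip : ∀ z z', |f₂ z (v n z) - f₂ z' (v n z')| ≤ (K + L₂ * Λ) * ‖z - z'‖ := by
        intro z z'
        have h1 : |f₂ z (v n z) - f₂ z' (v n z)| ≤ K * ‖z - z'‖ := hf₂xlip z z' _
        have h2 : |f₂ z' (v n z) - f₂ z' (v n z')| ≤ L₂ * ⨆ b, |v n z b - v n z' b| :=
          hf₂lip z' _ _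
        have h3 : (⨆ b, |v n z b - v n z' b|) ≤ Λ * ‖z - z'‖ := by
          apply ciSup_le; intro b; exact ih z z' b
        have h5 := abs_sub_le (f₂ z (v n z)) (f₂ z' (v n z)) (f₂ z' (v n z'))
        nlinarith [mul_le_mul_of_nonneg_left h3 hL₂]
      have hkan := kantorovich (κ₂ a x) (κ₂ a y) (fun z => f₂ z (v n z)) (K + L₂ * Λ)
        (add_nonneg hK (mul_nonneg hL₂ hΛ)) glip (vint n a x) (vint n a y)
        (hmom₂ a x) (hmom₂ a y)
      show |(∫ z, f₂ z (v n z) ∂(κ₂ a x)) - ∫ z, f₂ z (v n z) ∂(κ₂ a y)| ≤ Λ * ‖x - y‖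
      calc |(∫ z, f₂ z (v n z) ∂(κ₂ a x)) - ∫ z, f₂ z (v n z) ∂(κ₂ a y)|
          ≤ (K + L₂ * Λ) * W1 (κ₂ a x) (κ₂ a y) := hkan
        _ ≤ (K + L₂ * Λ) * (η * ‖x - y‖) :=
            mul_le_mul_of_nonneg_left (hκ₂lip a x y) (add_nonneg hK (mul_nonneg hL₂ hΛ))
        _ = Λ * ‖x - y‖ := by linear_combination ‖x - y‖ * hΛeq
  obtain ⟨C₂, hC₂⟩ := hu₂bdd
  have hC₂nn : 0 ≤ C₂ := by
    have a0 : A := Classical.arbitrary A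
    have h := hC₂ 0 a0
    nlinarith [hwpos (0 : EuclideanSpace ℝ (Fin d)), abs_nonneg (u₂ 0 a0)]
  have vconv : ∀ n x a, |v n x a - u₂ x a| ≤ (c * L₂) ^ n * C₂ * w x := by
    intro n
    induction n with
    | zero =>
      intro x a
      simpa [hv, fpIter, abs_sub_comm] using hC₂ x a
    | succ n ih =>
      intro x a
      have hb : (0:ℝ) ≤ L₂ * ((c * L₂) ^ n * C₂) :=
        mul_nonneg hL₂ (mul_nonneg (pow_nonneg (mul_nonneg hc hL₂) n) hC₂nn)
      have key := int_diff_bound (κ₂ a x) w (fun y => f₂ y (v n y)) (fun y => f₂ y (u₂ y))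
        (L₂ * ((c * L₂) ^ n * C₂)) (c * w x) hb (hwint₂ a x) (hwbd₂ a x)
        (vint n a x) (hu₂int a x) ?_
      · have heq : v (n+1) x a - u₂ x a
            = (∫ y, f₂ y (v n y) ∂(κ₂ a x)) - ∫ y, f₂ y (u₂ y) ∂(κ₂ a x) := by
          rw [hu₂fix a x]; rfl
        rw [heq]
        calc _ ≤ L₂ * ((c * L₂) ^ n * C₂) * (c * w x) := key
          _ = (c * L₂) ^ (n+1) * C₂ * w x := by ring
      · intro y
        have h1 : |f₂ y (v n y) - f₂ y (u₂ y)| ≤ L₂ * ⨆ b, |v n y b - u₂ y b| := hf₂lip y _ _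
        have h2 : (⨆ b, |v n y b - u₂ y b|) ≤ (c * L₂) ^ n * C₂ * w y := by
          apply ciSup_le; intro b; exact ih y b
        calc |f₂ y (v n y) - f₂ y (u₂ y)| ≤ L₂ * ((c * L₂) ^ n * C₂ * w y) :=
              h1.trans (mul_le_mul_of_nonneg_left h2 hL₂)
          _ = L₂ * ((c * L₂) ^ n * C₂) * w y := by ring
  intro x y a
  rw [← hΛdef]
  have hseq : ∀ n, |u₂ x a - u₂ y a| ≤ Λ * ‖x - y‖ + (c * L₂) ^ n * (C₂ * (w x + w y)) := by
    intro n
    have t1 := vconv n x a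
    have t2 := vconv n y a
    have t3 := vlip n x y a
    have h5 := abs_sub_le (u₂ x a) (v n x a) (u₂ y a)
    have h6 := abs_sub_le (v n x a) (v n y a) (u₂ y a)
    have e1 : |u₂ x a - v n x a| = |v n x a - u₂ x a| := abs_sub_comm _ _
    nlinarith
  have hlim : Filter.Tendsto (fun n => Λ * ‖x - y‖ + (c * L₂) ^ n * (C₂ * (w x + w y)))
      Filter.atTop (nhds (Λ * ‖x - y‖)) := by
    have h0 : Filter.Tendsto (fun n : ℕ => (c * L₂) ^ n) Filter.atTop (nhds 0) :=
      tendsto_pow_atTop_nhds_zero_of_lt_one (mul_nonneg hc hL₂) hcL₂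
    have := (h0.mul_const (C₂ * (w x + w y))).const_add (Λ * ‖x - y‖)
    simpa using this
  exact ge_of_tendsto' hlim hseq

set_option maxHeartbeats 1000000 in
/-- **Combined stability of stochastic fixed point equations in the nonlinearity and the
kernels.** If `u₁, u₂` are the unique `w`-bounded solutions of the fixed point equations for
nonlinearities `f₁, f₂` and kernels `κ₁, κ₂` respectively, then the weighted distance of
`u₁` and `u₂` is controlled by the weighted distance of the nonlinearities plus the weighted
Wasserstein-1 distance of the kernels. -/
theorem stmt_3 {d : ℕ} {A : Type*} [Fintype A] [Nonempty A]
    (η c K L₁ L₂ : ℝ) (hη : 0 ≤ η) (hc : 0 ≤ c) (hK : 0 ≤ K)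
    (hL₁ : 0 ≤ L₁) (hL₂ : 0 ≤ L₂)
    (hcL₁ : c * L₁ < 1) (hcL₂ : c * L₂ < 1) (hηL₂ : η * L₂ < 1)
    (w : EuclideanSpace ℝ (Fin d) → ℝ) (hw : Measurable w) (hwpos : ∀ x, 0 < w x)
    (f₁ f₂ : EuclideanSpace ℝ (Fin d) → (A → ℝ) → ℝ)
    (hf₁m : Measurable (fun p : EuclideanSpace ℝ (Fin d) × (A → ℝ) => f₁ p.1 p.2))
    (hf₂m : Measurable (fun p : EuclideanSpace ℝ (Fin d) × (A → ℝ) => f₂ p.1 p.2))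
    (hf₁lip : ∀ x r s, |f₁ x r - f₁ x s| ≤ L₁ * ⨆ a, |r a - s a|)
    (hf₂lip : ∀ x r s, |f₂ x r - f₂ x s| ≤ L₂ * ⨆ a, |r a - s a|)
    (hf₂xlip : ∀ x y r, |f₂ x r - f₂ y r| ≤ K * ‖x - y‖)
    (κ₁ κ₂ : A → Kernel (EuclideanSpace ℝ (Fin d)) (EuclideanSpace ℝ (Fin d)))
    (hκ₁ : ∀ a, IsMarkovKernel (κ₁ a)) (hκ₂ : ∀ a, IsMarkovKernel (κ₂ a))
    (hwint₁ : ∀ a x, Integrable w (κ₁ a x)) (hwint₂ : ∀ a x, Integrable w (κ₂ a x))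
    (hwbd₁ : ∀ a x, ∫ y, w y ∂(κ₁ a x) ≤ c * w x)
    (hwbd₂ : ∀ a x, ∫ y, w y ∂(κ₂ a x) ≤ c * w x)
    (hf₁0int : ∀ a x, Integrable (fun y => f₁ y 0) (κ₁ a x))
    (hf₂0int : ∀ a x, Integrable (fun y => f₂ y 0) (κ₂ a x))
    (hf₁0bd : ∃ C, ∀ a x, ∫ y, |f₁ y 0| ∂(κ₁ a x) ≤ C * w x)
    (hf₂0bd : ∃ C, ∀ a x, ∫ y, |f₂ y 0| ∂(κ₂ a x) ≤ C * w x)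
    (hmom₁ : ∀ a x, Integrable (fun y => ‖y‖) (κ₁ a x))
    (hmom₂ : ∀ a x, Integrable (fun y => ‖y‖) (κ₂ a x))
    (hmombd₁ : ∃ C, ∀ a x, ∫ y, ‖y‖ ∂(κ₁ a x) ≤ C * w x)
    (hmombd₂ : ∃ C, ∀ a x, ∫ y, ‖y‖ ∂(κ₂ a x) ≤ C * w x)
    (hκ₂lip : ∀ a x y, W1 (κ₂ a x) (κ₂ a y) ≤ η * ‖x - y‖)
    (u₁ u₂ : EuclideanSpace ℝ (Fin d) → A → ℝ)
    (hu₁m : ∀ a, Measurable fun x => u₁ x a)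
    (hu₂m : ∀ a, Measurable fun x => u₂ x a)
    (hu₁bdd : ∃ C, ∀ x a, |u₁ x a| ≤ C * w x)
    (hu₂bdd : ∃ C, ∀ x a, |u₂ x a| ≤ C * w x)
    (hu₁int : ∀ a x, Integrable (fun y => f₁ y (u₁ y)) (κ₁ a x))
    (hu₂int : ∀ a x, Integrable (fun y => f₂ y (u₂ y)) (κ₂ a x))
    (hu₁fix : ∀ a x, u₁ x a = ∫ y, f₁ y (u₁ y) ∂(κ₁ a x))
    (hu₂fix : ∀ a x, u₂ x a = ∫ y, f₂ y (u₂ y) ∂(κ₂ a x))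
    (D₁ : ℝ) (hD₁ : ∀ y r, |f₁ y r - f₂ y r| ≤ D₁ * w y)
    (D₂ : ℝ) (hD₂ : ∀ b y, W1 (κ₁ b y) (κ₂ b y) ≤ D₂ * w y) :
    ∀ x a, |u₁ x a - u₂ x a| ≤
      c / (1 - c * min L₁ L₂) * D₁ * w x
        + K / ((1 - η * L₂) * (1 - c * L₂)) * D₂ * w x := by
  haveI : ∀ a x, IsProbabilityMeasure (κ₁ a x) := fun a x => (hκ₁ a).isProbabilityMeasure x
  haveI : ∀ a x, IsProbabilityMeasure (κ₂ a x) := fun a x => (hκ₂ a).isProbabilityMeasure x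
  have h1ηL₂ : 0 < 1 - η * L₂ := by linarith
  have h1cL₂ : 0 < 1 - c * L₂ := by linarith
  have hminL : 0 ≤ min L₁ L₂ := le_min hL₁ hL₂
  have h1cL : 0 < 1 - c * min L₁ L₂ := by
    have : c * min L₁ L₂ ≤ c * L₁ := mul_le_mul_of_nonneg_left (min_le_left _ _) hc
    linarith
  -- Lipschitz constant of u₂ and of y ↦ f₂ y (u₂ y)
  obtain ⟨Λ, hΛdef⟩ : ∃ Λ : ℝ, Λ = η * K / (1 - η * L₂) := ⟨_, rfl⟩
  have hΛnn : 0 ≤ Λ := by rw [hΛdef]; exact div_nonneg (mul_nonneg hη hK) h1ηL₂.le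
  have hΛmul : Λ * (1 - η * L₂) = η * K := by rw [hΛdef]; field_simp
  have ulip : ∀ x y a, |u₂ x a - u₂ y a| ≤ Λ * ‖x - y‖ := by
    rw [hΛdef]
    exact fp_lipschitz η c K L₂ hη hc hK hL₂ hcL₂ hηL₂ w hwpos f₂ hf₂m hf₂lip hf₂xlip
      κ₂ hκ₂ hwint₂ hwbd₂ hf₂0int hf₂0bd hmom₂ hκ₂lip u₂ hu₂bdd hu₂int hu₂fix
  obtain ⟨Lg, hLgdef⟩ : ∃ Lg : ℝ, Lg = K + L₂ * Λ := ⟨_, rfl⟩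
  have hLgnn : 0 ≤ Lg := by rw [hLgdef]; exact add_nonneg hK (mul_nonneg hL₂ hΛnn)
  have hLgmul : Lg * (1 - η * L₂) = K := by rw [hLgdef]; linear_combination L₂ * hΛmul
  have glip : ∀ z z', |f₂ z (u₂ z) - f₂ z' (u₂ z')| ≤ Lg * ‖z - z'‖ := by
    intro z z'
    have h1 : |f₂ z (u₂ z) - f₂ z' (u₂ z)| ≤ K * ‖z - z'‖ := hf₂xlip z z' _
    have h2 : |f₂ z' (u₂ z) - f₂ z' (u₂ z')| ≤ L₂ * ⨆ b, |u₂ z b - u₂ z' b| := hf₂lip z' _ _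
    have h3 : (⨆ b, |u₂ z b - u₂ z' b|) ≤ Λ * ‖z - z'‖ := ciSup_le fun b => ulip z z' b
    have h5 := abs_sub_le (f₂ z (u₂ z)) (f₂ z' (u₂ z)) (f₂ z' (u₂ z'))
    rw [hLgdef]
    nlinarith [mul_le_mul_of_nonneg_left h3 hL₂]
  have hu₂pi : Measurable (fun y => u₂ y : EuclideanSpace ℝ (Fin d) → A → ℝ) :=
    measurable_pi_lambda _ hu₂m
  have hu₁pi : Measurable (fun y => u₁ y : EuclideanSpace ℝ (Fin d) → A → ℝ) :=
    measurable_pi_lambda _ hu₁m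
  have gmeas : Measurable fun y => f₂ y (u₂ y) := hf₂m.comp (measurable_id.prodMk hu₂pi)
  have f₁u₂meas : Measurable fun y => f₁ y (u₂ y) := hf₁m.comp (measurable_id.prodMk hu₂pi)
  have f₂u₁meas : Measurable fun y => f₂ y (u₁ y) := hf₂m.comp (measurable_id.prodMk hu₁pi)
  -- integrability of f₂(·, u₂ ·) with respect to κ₁
  have gint₁ : ∀ a x, Integrable (fun y => f₂ y (u₂ y)) (κ₁ a x) := by
    intro a x
    refine ((integrable_const (|f₂ (0 : EuclideanSpace ℝ (Fin d)) (u₂ 0)|)).add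
      ((hmom₁ a x).const_mul Lg)).mono' gmeas.aestronglyMeasurable ?_
    filter_upwards with y
    have h1 := glip y 0
    have h2 := abs_sub_abs_le_abs_sub (f₂ y (u₂ y)) (f₂ (0 : EuclideanSpace ℝ (Fin d)) (u₂ 0))
    simp only [sub_zero] at h1
    simp only [Real.norm_eq_abs, Pi.add_apply]
    nlinarith [abs_nonneg (f₂ (0 : EuclideanSpace ℝ (Fin d)) (u₂ 0))]
  obtain ⟨C₁, hC₁⟩ := hu₁bdd
  obtain ⟨C₂, hC₂⟩ := hu₂bdd
  have hCC : ∀ y, (⨆ b, |u₁ y b - u₂ y b|) ≤ (C₁ + C₂) * w y := by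
    intro y
    apply ciSup_le
    intro b
    have := abs_sub (u₁ y b) (u₂ y b)
    nlinarith [hC₁ y b, hC₂ y b]
  have f₁u₂int : ∀ a x, Integrable (fun y => f₁ y (u₂ y)) (κ₁ a x) := by
    intro a x
    refine (((hu₁int a x).abs).add ((hwint₁ a x).const_mul (L₁ * (C₁ + C₂)))).mono'
      f₁u₂meas.aestronglyMeasurable ?_
    filter_upwards with y
    have h1 : |f₁ y (u₂ y) - f₁ y (u₁ y)| ≤ L₁ * ⨆ b, |u₂ y b - u₁ y b| := hf₁lip y _ _
    have h2 : (⨆ b, |u₂ y b - u₁ y b|) ≤ (C₁ + C₂) * w y := by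
      apply ciSup_le
      intro b
      have := abs_sub (u₂ y b) (u₁ y b)
      nlinarith [hC₁ y b, hC₂ y b]
    have h4 := abs_sub_abs_le_abs_sub (f₁ y (u₂ y)) (f₁ y (u₁ y))
    simp only [Real.norm_eq_abs, Pi.add_apply]
    nlinarith [mul_le_mul_of_nonneg_left h2 hL₁]
  have f₂u₁int : ∀ a x, Integrable (fun y => f₂ y (u₁ y)) (κ₁ a x) := by
    intro a x
    refine (((gint₁ a x).abs).add ((hwint₁ a x).const_mul (L₂ * (C₁ + C₂)))).mono'
      f₂u₁meas.aestronglyMeasurable ?_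
    filter_upwards with y
    have h1 : |f₂ y (u₁ y) - f₂ y (u₂ y)| ≤ L₂ * ⨆ b, |u₁ y b - u₂ y b| := hf₂lip y _ _
    have h4 := abs_sub_abs_le_abs_sub (f₂ y (u₁ y)) (f₂ y (u₂ y))
    simp only [Real.norm_eq_abs, Pi.add_apply]
    nlinarith [mul_le_mul_of_nonneg_left (hCC y) hL₂]
  -- weighted sup distance
  obtain ⟨S, hSdef⟩ : ∃ S : ℝ, S = ⨆ p : EuclideanSpace ℝ (Fin d) × A,
      |u₁ p.1 p.2 - u₂ p.1 p.2| / w p.1 := ⟨_, rfl⟩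
  have hSbdd : BddAbove (Set.range fun p : EuclideanSpace ℝ (Fin d) × A =>
      |u₁ p.1 p.2 - u₂ p.1 p.2| / w p.1) := by
    refine ⟨C₁ + C₂, ?_⟩
    rintro r ⟨p, rfl⟩
    rw [div_le_iff₀ (hwpos p.1)]
    have := abs_sub (u₁ p.1 p.2) (u₂ p.1 p.2)
    nlinarith [hC₁ p.1 p.2, hC₂ p.1 p.2]
  have hSle : ∀ x a, |u₁ x a - u₂ x a| ≤ S * w x := by
    intro x a
    have h := le_ciSup hSbdd (⟨x, a⟩ : EuclideanSpace ℝ (Fin d) × A)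
    rw [← hSdef] at h
    exact (div_le_iff₀ (hwpos x)).mp h
  have hSnn : 0 ≤ S := by
    have h := le_ciSup hSbdd (⟨0, Classical.arbitrary A⟩ : EuclideanSpace ℝ (Fin d) × A)
    rw [← hSdef] at h
    exact le_trans (div_nonneg (abs_nonneg _) (hwpos _).le) h
  have hD₁nn : 0 ≤ D₁ := by
    have h := hD₁ 0 0
    nlinarith [abs_nonneg (f₁ (0 : EuclideanSpace ℝ (Fin d)) 0 - f₂ 0 0),
      hwpos (0 : EuclideanSpace ℝ (Fin d))]
  have hD₂nn : 0 ≤ D₂ := by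
    have h := hD₂ (Classical.arbitrary A) 0
    nlinarith [W1_nonneg (κ₁ (Classical.arbitrary A) 0) (κ₂ (Classical.arbitrary A) 0),
      hwpos (0 : EuclideanSpace ℝ (Fin d))]
  -- the key pointwise estimate
  have key : ∀ x a, |u₁ x a - u₂ x a| ≤
      (c * min L₁ L₂ * S + c * D₁ + Lg * D₂) * w x := by
    intro x a
    have T3 : |(∫ y, f₂ y (u₂ y) ∂(κ₁ a x)) - ∫ y, f₂ y (u₂ y) ∂(κ₂ a x)| ≤ Lg * (D₂ * w x) := by
      have hkan := kantorovich (κ₁ a x) (κ₂ a x) (fun y => f₂ y (u₂ y)) Lg hLgnn glip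
        (gint₁ a x) (hu₂int a x) (hmom₁ a x) (hmom₂ a x)
      exact hkan.trans (mul_le_mul_of_nonneg_left (hD₂ a x) hLgnn)
    rcases le_total L₁ L₂ with hmin | hmin
    · -- min = L₁ : vary the solution with f₁ first
      have T1 : |(∫ y, f₁ y (u₁ y) ∂(κ₁ a x)) - ∫ y, f₁ y (u₂ y) ∂(κ₁ a x)|
          ≤ L₁ * S * (c * w x) := by
        refine int_diff_bound (κ₁ a x) w _ _ (L₁ * S) (c * w x)
          (mul_nonneg hL₁ hSnn) (hwint₁ a x) (hwbd₁ a x) (hu₁int a x) (f₁u₂int a x) ?_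
        intro y
        have h1 : |f₁ y (u₁ y) - f₁ y (u₂ y)| ≤ L₁ * ⨆ b, |u₁ y b - u₂ y b| := hf₁lip y _ _
        have h2 : (⨆ b, |u₁ y b - u₂ y b|) ≤ S * w y := ciSup_le fun b => hSle y b
        calc |f₁ y (u₁ y) - f₁ y (u₂ y)| ≤ L₁ * (S * w y) :=
              h1.trans (mul_le_mul_of_nonneg_left h2 hL₁)
          _ = L₁ * S * w y := by ring
      have T2 : |(∫ y, f₁ y (u₂ y) ∂(κ₁ a x)) - ∫ y, f₂ y (u₂ y) ∂(κ₁ a x)|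
          ≤ D₁ * (c * w x) :=
        int_diff_bound (κ₁ a x) w _ _ D₁ (c * w x) hD₁nn (hwint₁ a x) (hwbd₁ a x)
          (f₁u₂int a x) (gint₁ a x) (fun y => hD₁ y (u₂ y))
      have hrw : u₁ x a - u₂ x a =
          ((∫ y, f₁ y (u₁ y) ∂(κ₁ a x)) - ∫ y, f₁ y (u₂ y) ∂(κ₁ a x))
          + ((∫ y, f₁ y (u₂ y) ∂(κ₁ a x)) - ∫ y, f₂ y (u₂ y) ∂(κ₁ a x))
          + ((∫ y, f₂ y (u₂ y) ∂(κ₁ a x)) - ∫ y, f₂ y (u₂ y) ∂(κ₂ a x)) := by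
        rw [hu₁fix a x, hu₂fix a x]; ring
      have htri : |u₁ x a - u₂ x a| ≤
          |(∫ y, f₁ y (u₁ y) ∂(κ₁ a x)) - ∫ y, f₁ y (u₂ y) ∂(κ₁ a x)|
          + |(∫ y, f₁ y (u₂ y) ∂(κ₁ a x)) - ∫ y, f₂ y (u₂ y) ∂(κ₁ a x)|
          + |(∫ y, f₂ y (u₂ y) ∂(κ₁ a x)) - ∫ y, f₂ y (u₂ y) ∂(κ₂ a x)| := by
        rw [hrw]
        exact (abs_add_le _ _).trans (add_le_add_left (abs_add_le _ _) _)
      have heq : (c * min L₁ L₂ * S + c * D₁ + Lg * D₂) * w x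
          = L₁ * S * (c * w x) + D₁ * (c * w x) + Lg * (D₂ * w x) := by
        rw [min_eq_left hmin]; ring
      rw [heq]
      linarith
    · -- min = L₂ : vary the nonlinearity first
      have T1 : |(∫ y, f₁ y (u₁ y) ∂(κ₁ a x)) - ∫ y, f₂ y (u₁ y) ∂(κ₁ a x)|
          ≤ D₁ * (c * w x) :=
        int_diff_bound (κ₁ a x) w _ _ D₁ (c * w x) hD₁nn (hwint₁ a x) (hwbd₁ a x)
          (hu₁int a x) (f₂u₁int a x) (fun y => hD₁ y (u₁ y))
      have T2 : |(∫ y, f₂ y (u₁ y) ∂(κ₁ a x)) - ∫ y, f₂ y (u₂ y) ∂(κ₁ a x)|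
          ≤ L₂ * S * (c * w x) := by
        refine int_diff_bound (κ₁ a x) w _ _ (L₂ * S) (c * w x)
          (mul_nonneg hL₂ hSnn) (hwint₁ a x) (hwbd₁ a x) (f₂u₁int a x) (gint₁ a x) ?_
        intro y
        have h1 : |f₂ y (u₁ y) - f₂ y (u₂ y)| ≤ L₂ * ⨆ b, |u₁ y b - u₂ y b| := hf₂lip y _ _
        have h2 : (⨆ b, |u₁ y b - u₂ y b|) ≤ S * w y := ciSup_le fun b => hSle y b
        calc |f₂ y (u₁ y) - f₂ y (u₂ y)| ≤ L₂ * (S * w y) :=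
              h1.trans (mul_le_mul_of_nonneg_left h2 hL₂)
          _ = L₂ * S * w y := by ring
      have hrw : u₁ x a - u₂ x a =
          ((∫ y, f₁ y (u₁ y) ∂(κ₁ a x)) - ∫ y, f₂ y (u₁ y) ∂(κ₁ a x))
          + ((∫ y, f₂ y (u₁ y) ∂(κ₁ a x)) - ∫ y, f₂ y (u₂ y) ∂(κ₁ a x))
          + ((∫ y, f₂ y (u₂ y) ∂(κ₁ a x)) - ∫ y, f₂ y (u₂ y) ∂(κ₂ a x)) := by
        rw [hu₁fix a x, hu₂fix a x]; ring
      have htri : |u₁ x a - u₂ x a| ≤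
          |(∫ y, f₁ y (u₁ y) ∂(κ₁ a x)) - ∫ y, f₂ y (u₁ y) ∂(κ₁ a x)|
          + |(∫ y, f₂ y (u₁ y) ∂(κ₁ a x)) - ∫ y, f₂ y (u₂ y) ∂(κ₁ a x)|
          + |(∫ y, f₂ y (u₂ y) ∂(κ₁ a x)) - ∫ y, f₂ y (u₂ y) ∂(κ₂ a x)| := by
        rw [hrw]
        exact (abs_add_le _ _).trans (add_le_add_left (abs_add_le _ _) _)
      have heq : (c * min L₁ L₂ * S + c * D₁ + Lg * D₂) * w x
          = D₁ * (c * w x) + L₂ * S * (c * w x) + Lg * (D₂ * w x) := by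
        rw [min_eq_right hmin]; ring
      rw [heq]
      linarith
  -- solve for S
  have hS2 : S ≤ c * min L₁ L₂ * S + c * D₁ + Lg * D₂ := by
    conv_lhs => rw [hSdef]
    apply ciSup_le
    intro p
    rw [div_le_iff₀ (hwpos p.1)]
    exact key p.1 p.2
  have hSle2 : S ≤ (c * D₁ + Lg * D₂) / (1 - c * min L₁ L₂) := by
    rw [le_div_iff₀ h1cL]
    nlinarith [hS2]
  have hfrac : Lg / (1 - c * min L₁ L₂) ≤ K / ((1 - η * L₂) * (1 - c * L₂)) := by
    rw [div_le_div_iff₀ h1cL (mul_pos h1ηL₂ h1cL₂)]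
    have hmin2 : c * min L₁ L₂ ≤ c * L₂ := mul_le_mul_of_nonneg_left (min_le_right _ _) hc
    have hprod : Lg * ((1 - η * L₂) * (1 - c * L₂)) = K * (1 - c * L₂) := by
      linear_combination (1 - c * L₂) * hLgmul
    rw [hprod]
    nlinarith [mul_le_mul_of_nonneg_left hmin2 hK]
  intro x a
  have heq2 : (c * D₁ + Lg * D₂) / (1 - c * min L₁ L₂)
      = c / (1 - c * min L₁ L₂) * D₁ + Lg / (1 - c * min L₁ L₂) * D₂ := by
    field_simp
  calc |u₁ x a - u₂ x a| ≤ S * w x := hSle x a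
    _ ≤ ((c * D₁ + Lg * D₂) / (1 - c * min L₁ L₂)) * w x :=
        mul_le_mul_of_nonneg_right hSle2 (hwpos x).le
    _ = c / (1 - c * min L₁ L₂) * D₁ * w x
        + (Lg / (1 - c * min L₁ L₂)) * D₂ * w x := by rw [heq2]; ring
    _ ≤ c / (1 - c * min L₁ L₂) * D₁ * w x
        + K / ((1 - η * L₂) * (1 - c * L₂)) * D₂ * w x := by
        have := mul_le_mul_of_nonneg_right
          (mul_le_mul_of_nonneg_right hfrac hD₂nn) (hwpos x).le
        linarith
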